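/- The best-response map P(X) is well defined: if two base prices produce the same aggregate uncleared sharing energy, they produce the same total power exchange; that is, for all w₁, w₂ ∈ ℝ, X(w₁) = X(w₂) implies P(w₁) = P(w₂). -/
import Mathlib


open Finset

variable {U : Type*} [Fintype U]

/-- A point `(p, p⁺, p⁻, x)` is feasible for the L-ESM subproblem:
power balance, generator bounds, and nonnegativity of grid trades. -/
def Feasible (D pbar : U → ℝ) (p pp pm x : U → ℝ) : Prop :=
  ∀ m : U, D m + x m + pm m = p m + pp m ∧
    0 ≤ p m ∧ p m ≤ pbar m ∧ 0 ≤ pp m ∧ 0 ≤ pm m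

/-- Objective of the L-ESM subproblem at base price `w0`. -/
noncomputable def Objective (c b : U → ℝ) (wplus wminus a w0 : ℝ)
    (p pp pm x : U → ℝ) : ℝ :=
  (∑ m : U, (c m / 2 * (p m) ^ 2 + b m * p m + wplus * pp m
      - wminus * pm m - w0 * x m))
    + a / 2 * ∑ m : U, (x m) ^ 2 + a / 2 * (∑ m : U, x m) ^ 2

/-- `(p, p⁺, p⁻, x)` is an optimal solution of the L-ESM subproblem. -/
noncomputable def IsOptimal (c b D pbar : U → ℝ) (wplus wminus a w0 : ℝ)
    (p pp pm x : U → ℝ) : Prop :=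
  Feasible D pbar p pp pm x ∧
    ∀ q qp qm y : U → ℝ, Feasible D pbar q qp qm y →
      Objective c b wplus wminus a w0 p pp pm x ≤
        Objective c b wplus wminus a w0 q qp qm y

/-- the best-response map `P(X)` is well defined: equal
aggregate uncleared energies imply equal total power exchanges. -/
theorem lesm_best_response_well_defined [Nonempty U]
    (c b D pbar : U → ℝ) (wplus wminus a : ℝ)
    (hc : ∀ m, 0 < c m) (hpbar : ∀ m, 0 ≤ pbar m)
    (hb : ∀ m, 0 < b m) (hbw : ∀ m, b m < wminus)
    (hw : wminus < wplus) (ha : 0 < a)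
    (pstar ppstar pmstar xstar : ℝ → U → ℝ)
    (hopt : ∀ w0 : ℝ, IsOptimal c b D pbar wplus wminus a w0
      (pstar w0) (ppstar w0) (pmstar w0) (xstar w0)) :
    ∀ w1 w2 : ℝ,
      (∑ m : U, xstar w1 m) = (∑ m : U, xstar w2 m) →
      (∑ m : U, (xstar w1 m + pmstar w1 m - ppstar w1 m)) =
        (∑ m : U, (xstar w2 m + pmstar w2 m - ppstar w2 m)) := by
  classical
  intro w1 w2 hX
  obtain ⟨hf1, ho1⟩ := hopt w1
  obtain ⟨hf2, ho2⟩ := hopt w2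
  set p1 := pstar w1 with hp1d
  set pp1 := ppstar w1 with hpp1d
  set pm1 := pmstar w1 with hpm1d
  set x1 := xstar w1 with hx1d
  set p2 := pstar w2 with hp2d
  set pp2 := ppstar w2 with hpp2d
  set pm2 := pmstar w2 with hpm2d
  set x2 := xstar w2 with hx2d
  -- shift lemma: dependence of the objective on w0 is affine through ∑ x
  have hshift : ∀ (w w' : ℝ) (p pp pm x : U → ℝ),
      Objective c b wplus wminus a w p pp pm x
        = Objective c b wplus wminus a w' p pp pm x + (w' - w) * ∑ m : U, x m := by
    intro w w' p pp pm x
    have h : (∑ m : U, (c m / 2 * (p m) ^ 2 + b m * p m + wplus * pp m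
        - wminus * pm m - w * x m))
        = (∑ m : U, (c m / 2 * (p m) ^ 2 + b m * p m + wplus * pp m
        - wminus * pm m - w' * x m)) + (w' - w) * ∑ m : U, x m := by
      rw [Finset.mul_sum, ← Finset.sum_add_distrib]
      exact Finset.sum_congr rfl fun m _ => by ring
    unfold Objective
    linarith [h]
  -- rewriting of the objective with the a/2 x^2 terms folded in
  have hsplit : ∀ (w : ℝ) (p pp pm x : U → ℝ),
      Objective c b wplus wminus a w p pp pm x
        = (∑ m : U, (c m / 2 * (p m) ^ 2 + b m * p m + wplus * pp m
            - wminus * pm m - w * x m + a / 2 * (x m) ^ 2))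
          + a / 2 * (∑ m : U, x m) ^ 2 := by
    intro w p pp pm x
    unfold Objective
    rw [Finset.sum_add_distrib, ← Finset.mul_sum]
  -- midpoint
  set pmid : U → ℝ := fun m => (p1 m + p2 m) / 2 with hpmidd
  set ppmid : U → ℝ := fun m => (pp1 m + pp2 m) / 2 with hppmidd
  set pmmid : U → ℝ := fun m => (pm1 m + pm2 m) / 2 with hpmmidd
  set xmid : U → ℝ := fun m => (x1 m + x2 m) / 2 with hxmidd
  have hfmid : Feasible D pbar pmid ppmid pmmid xmid := by
    intro m
    obtain ⟨e1, e2, e3, e4, e5⟩ := hf1 m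
    obtain ⟨g1, g2, g3, g4, g5⟩ := hf2 m
    refine ⟨?_, ?_, ?_, ?_, ?_⟩ <;>
      simp only [hpmidd, hppmidd, hpmmidd, hxmidd] <;> linarith
  have hxmsum : ∑ m : U, xmid m = ∑ m : U, x2 m := by
    simp only [hxmidd]
    rw [← Finset.sum_div, Finset.sum_add_distrib, hX]
    ring
  -- key convexity identity
  have key : Objective c b wplus wminus a w1 pmid ppmid pmmid xmid
      = (Objective c b wplus wminus a w1 p1 pp1 pm1 x1
          + Objective c b wplus wminus a w1 p2 pp2 pm2 x2) / 2
        - ∑ m : U, (c m / 8 * (p1 m - p2 m) ^ 2 + a / 8 * (x1 m - x2 m) ^ 2) := by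
    rw [hsplit, hsplit, hsplit, hxmsum, hX]
    have hsum : (∑ m : U, (c m / 2 * (pmid m) ^ 2 + b m * pmid m + wplus * ppmid m
            - wminus * pmmid m - w1 * xmid m + a / 2 * (xmid m) ^ 2))
        = ((∑ m : U, (c m / 2 * (p1 m) ^ 2 + b m * p1 m + wplus * pp1 m
            - wminus * pm1 m - w1 * x1 m + a / 2 * (x1 m) ^ 2))
          + (∑ m : U, (c m / 2 * (p2 m) ^ 2 + b m * p2 m + wplus * pp2 m
            - wminus * pm2 m - w1 * x2 m + a / 2 * (x2 m) ^ 2))) / 2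
          - ∑ m : U, (c m / 8 * (p1 m - p2 m) ^ 2 + a / 8 * (x1 m - x2 m) ^ 2) := by
      rw [← Finset.sum_add_distrib, Finset.sum_div, ← Finset.sum_sub_distrib]
      refine Finset.sum_congr rfl fun m _ => ?_
      simp only [hpmidd, hppmidd, hpmmidd, hxmidd]
      ring
    linarith [hsum]
  -- optimality cross inequalities
  have h1le := ho1 p2 pp2 pm2 x2 hf2
  have h2le := ho2 p1 pp1 pm1 x1 hf1
  have e12 := hshift w1 w2 p2 pp2 pm2 x2
  have e21 := hshift w2 w1 p1 pp1 pm1 x1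
  rw [hX] at e21
  have heq : Objective c b wplus wminus a w1 p2 pp2 pm2 x2
      = Objective c b wplus wminus a w1 p1 pp1 pm1 x1 := by linarith
  have hmidle := ho1 pmid ppmid pmmid xmid hfmid
  have hpen : ∑ m : U, (c m / 8 * (p1 m - p2 m) ^ 2 + a / 8 * (x1 m - x2 m) ^ 2) ≤ 0 := by
    rw [key, heq] at hmidle
    linarith
  have hnn : ∀ m ∈ Finset.univ (α := U),
      (0 : ℝ) ≤ c m / 8 * (p1 m - p2 m) ^ 2 + a / 8 * (x1 m - x2 m) ^ 2 := by
    intro m _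
    have := (hc m).le
    have := ha.le
    positivity
  have hpen0 := (Finset.sum_eq_zero_iff_of_nonneg hnn).1
    (le_antisymm hpen (Finset.sum_nonneg hnn))
  have hp12 : ∀ m : U, p1 m = p2 m := by
    intro m
    have h := hpen0 m (Finset.mem_univ m)
    have h1 : 0 ≤ c m / 8 * (p1 m - p2 m) ^ 2 :=
      mul_nonneg (by linarith [hc m]) (sq_nonneg _)
    have h2 : 0 ≤ a / 8 * (x1 m - x2 m) ^ 2 :=
      mul_nonneg (by linarith) (sq_nonneg _)
    have h3 : c m / 8 * (p1 m - p2 m) ^ 2 = 0 := by linarith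
    have h4 : (p1 m - p2 m) ^ 2 = 0 := by
      rcases mul_eq_zero.1 h3 with h' | h'
      · exfalso; have := hc m; linarith
      · exact h'
    have h5 : p1 m - p2 m = 0 := by
      have := sq_eq_zero_iff.1 h4
      exact this
    linarith
  -- conclude: total power exchange equals ∑ p − ∑ D
  have hs1 : ∑ m : U, (x1 m + pm1 m - pp1 m) = ∑ m : U, (p1 m - D m) :=
    Finset.sum_congr rfl fun m _ => by have := (hf1 m).1; linarith
  have hs2 : ∑ m : U, (x2 m + pm2 m - pp2 m) = ∑ m : U, (p2 m - D m) :=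
    Finset.sum_congr rfl fun m _ => by have := (hf2 m).1; linarith
  rw [hs1, hs2]
  exact Finset.sum_congr rfl fun m _ => by rw [hp12 m]
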